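/- Let Φ₀ˢ be the vector space spanned by {φ_{0mn}, φ_{1mn} : m,n ∈ ℕ} with sesquilinear relations induced as follows: suppose B is a Hermitian sesquilinear form on span{ψ_{mn}, φ_{1mn}} with B(φ_{1m'n'}, φ_{1mn}) = 2π²(−1)^{m+m'} δ_{mn} δ_{m'n'} Γ(m+3/2)Γ(m'+3/2)/(Γ(m+1)Γ(m'+1)), B(ψ_{m'n'}, φ_{1mn}) = 0, and that there is a linear operator C with B(Cx,y) = B(x,Cy), Cφ_{1mn} = ψ_{mn}, and Cψ_{mn} = 4[(m+1/2)(n+1/2)(φ_{1mn} + φ_{1,m−1,n−1}) + (m+1)(n+1)(φ_{1mn} + φ_{1,m+1,n+1})]. Then B(ψ_{m'n'}, ψ_{mn}) = −2π²(−1)^{m+m'} δ_{mn} δ_{m'n'} Γ(m+3/2)Γ(m'+3/2)/(Γ(m+1)Γ(m'+1)); in particular B takes both positive and negative values on its diagonal and is indefinite. -/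

import Mathlib

namespace Stmt19

/-- The `p = q = 1` group-averaging sesquilinear form: given the values on the
`φ₁`-sector, the vanishing of the mixed terms, and a symmetric operator `C` with the
stated action, the form on the `ψ`-sector is forced to be
`B(ψ_{m'n'}, ψ_{mn}) = −2π²(−1)^{m+m'} δ_{mn} δ_{m'n'} Γ(m+3/2)Γ(m'+3/2)/(Γ(m+1)Γ(m'+1))`;
in particular `B` takes both positive and negative values on its diagonal and is
indefinite. -/
theorem group_averaging_indefinite
    (W : Type*) [AddCommGroup W] [Module ℂ W]
    (ψ φ1 : ℤ → ℤ → W)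
    (hφzero : ∀ m n : ℤ, m < 0 ∨ n < 0 → φ1 m n = 0)
    (B : W → W → ℂ)
    (hadd1 : ∀ x y z, B (x + y) z = B x z + B y z)
    (hadd2 : ∀ x y z, B x (y + z) = B x y + B x z)
    (hsmul1 : ∀ (a : ℂ) x y, B (a • x) y = (starRingEnd ℂ) a * B x y)
    (hsmul2 : ∀ (a : ℂ) x y, B x (a • y) = a * B x y)
    (hherm : ∀ x y, B x y = (starRingEnd ℂ) (B y x))
    (C : W → W)
    (hsym : ∀ x y, B (C x) y = B x (C y))
    (hCφ : ∀ m n : ℤ, 0 ≤ m → 0 ≤ n → C (φ1 m n) = ψ m n)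
    (hCψ : ∀ m n : ℤ, 0 ≤ m → 0 ≤ n →
      C (ψ m n) =
        (4 * ((m:ℂ) + 1/2) * ((n:ℂ) + 1/2)) • (φ1 m n + φ1 (m-1) (n-1))
        + (4 * ((m:ℂ) + 1) * ((n:ℂ) + 1)) • (φ1 m n + φ1 (m+1) (n+1)))
    (hBφφ : ∀ m n m' n' : ℤ, 0 ≤ m → 0 ≤ n → 0 ≤ m' → 0 ≤ n' →
      B (φ1 m' n') (φ1 m n)
        = ((2 * Real.pi^2 : ℝ) : ℂ) * (-1:ℂ)^(m + m')
          * (if m = n then 1 else 0) * (if m' = n' then 1 else 0)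
          * ((Real.Gamma ((m:ℝ) + 3/2) * Real.Gamma ((m':ℝ) + 3/2)
              / (Real.Gamma ((m:ℝ) + 1) * Real.Gamma ((m':ℝ) + 1)) : ℝ) : ℂ))
    (hBψφ : ∀ m n m' n' : ℤ, 0 ≤ m → 0 ≤ n → 0 ≤ m' → 0 ≤ n' →
      B (ψ m' n') (φ1 m n) = 0) :
    (∀ m n m' n' : ℤ, 0 ≤ m → 0 ≤ n → 0 ≤ m' → 0 ≤ n' →
      B (ψ m' n') (ψ m n)
        = -(((2 * Real.pi^2 : ℝ) : ℂ) * (-1:ℂ)^(m + m')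
            * (if m = n then 1 else 0) * (if m' = n' then 1 else 0)
            * ((Real.Gamma ((m:ℝ) + 3/2) * Real.Gamma ((m':ℝ) + 3/2)
                / (Real.Gamma ((m:ℝ) + 1) * Real.Gamma ((m':ℝ) + 1)) : ℝ) : ℂ))) ∧
    (∃ x, 0 < (B x x).re) ∧ (∃ y, (B y y).re < 0) := by
  have Bx0 : ∀ x, B x 0 = 0 := by
    intro x
    have h := hadd2 x 0 0
    rw [add_zero] at h
    exact (left_eq_add.mp h)
  have hπ : (0:ℝ) < Real.pi := Real.pi_pos
  -- sign lemmas
  have hneg1 : (-1:ℂ) ≠ 0 := by norm_num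
  have main : ∀ m n m' n' : ℤ, 0 ≤ m → 0 ≤ n → 0 ≤ m' → 0 ≤ n' →
      B (ψ m' n') (ψ m n)
        = -(((2 * Real.pi^2 : ℝ) : ℂ) * (-1:ℂ)^(m + m')
            * (if m = n then 1 else 0) * (if m' = n' then 1 else 0)
            * ((Real.Gamma ((m:ℝ) + 3/2) * Real.Gamma ((m':ℝ) + 3/2)
                / (Real.Gamma ((m:ℝ) + 1) * Real.Gamma ((m':ℝ) + 1)) : ℝ) : ℂ)) := by
    intro m n m' n' hm hn hm' hn'
    have h1 : B (ψ m' n') (ψ m n) = B (φ1 m' n') (C (ψ m n)) := by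
      rw [← hCφ m' n' hm' hn', hsym]
    rw [h1, hCψ m n hm hn, hadd2, hsmul2, hsmul2, hadd2, hadd2]
    have hmid := hBφφ m n m' n' hm hn hm' hn'
    have hup := hBφφ (m+1) (n+1) m' n' (by omega) (by omega) hm' hn'
    have e2 : (-1:ℂ)^(m+1 + m') = -(-1:ℂ)^(m + m') := by
      rw [show m+1+m' = (m+m') + 1 by ring, zpow_add₀ hneg1]
      norm_num
    -- Gamma recurrences at m+1
    have hm0 : (0:ℝ) ≤ (m:ℝ) := by exact_mod_cast hm
    have gC : Real.Gamma (((m+1:ℤ):ℝ) + 3/2) = ((m:ℝ) + 3/2) * Real.Gamma ((m:ℝ) + 3/2) := by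
      push_cast
      rw [show (m:ℝ) + 1 + 3/2 = ((m:ℝ) + 3/2) + 1 by ring,
        Real.Gamma_add_one (by positivity : ((m:ℝ) + 3/2) ≠ 0)]
    have gD : Real.Gamma (((m+1:ℤ):ℝ) + 1) = ((m:ℝ) + 1) * Real.Gamma ((m:ℝ) + 1) := by
      push_cast
      rw [show (m:ℝ) + 1 + 1 = ((m:ℝ) + 1) + 1 by ring,
        Real.Gamma_add_one (by positivity : ((m:ℝ) + 1) ≠ 0)]
    by_cases hd : m = n
    · subst hd
      by_cases h1m : 1 ≤ m
      · -- m = n ≥ 1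
        have hdown := hBφφ (m-1) (m-1) m' n' (by omega) (by omega) hm' hn'
        have e1 : (-1:ℂ)^(m-1 + m') = -(-1:ℂ)^(m + m') := by
          rw [show m-1+m' = (m+m') + (-1) by ring, zpow_add₀ hneg1]
          norm_num
        have hm0' : (0:ℝ) < (m:ℝ) := by exact_mod_cast h1m
        push_cast at hdown
        rw [show (m:ℝ) - 1 + 1 = (m:ℝ) by ring,
          show (m:ℝ) - 1 + 3/2 = (m:ℝ) + 1/2 by ring] at hdown
        rw [hmid, hup, hdown, e1, e2]
        simp only [eq_self_iff_true, if_true, mul_one]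
        push_cast
        have hGa : ((Real.Gamma ((m:ℝ)) : ℝ) : ℂ) ≠ 0 :=
          Complex.ofReal_ne_zero.mpr (Real.Gamma_pos_of_pos hm0').ne'
        have hGa1 : ((Real.Gamma ((m:ℝ) + 1) : ℝ) : ℂ) ≠ 0 :=
          Complex.ofReal_ne_zero.mpr (Real.Gamma_pos_of_pos (by linarith)).ne'
        have hGb1 : ((Real.Gamma ((m':ℝ) + 1) : ℝ) : ℂ) ≠ 0 := by
          have h0 : (0:ℝ) ≤ (m':ℝ) := by exact_mod_cast hm'
          exact Complex.ofReal_ne_zero.mpr (Real.Gamma_pos_of_pos (by linarith)).ne'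
        have hmC : ((m:ℂ)) ≠ 0 := by
          have : ((m:ℝ)) ≠ 0 := hm0'.ne'
          exact_mod_cast this
        have hmhalf : ((m:ℂ) + 1/2) ≠ 0 := by
          have h := Complex.ofReal_ne_zero.mpr (by positivity : ((m:ℝ) + 1/2) ≠ 0)
          push_cast at h
          exact h
        have hm1 : ((m:ℂ) + 1) ≠ 0 := by
          have h := Complex.ofReal_ne_zero.mpr (by positivity : ((m:ℝ) + 1) ≠ 0)
          push_cast at h
          exact h
        have key1 : ∀ (c d x y z w : ℂ), c ≠ 0 → d ≠ 0 → z ≠ 0 → w ≠ 0 →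
            (x*y)/(z*w) = (c/d) * (((d*x)*y) / ((c*z)*w)) := by
          intro c d x y z w hc hd hz hw
          field_simp
        have key2 : ∀ (c d x y z w : ℂ), c ≠ 0 → z ≠ 0 → w ≠ 0 →
            ((d*x)*y)/((c*z)*w) = (d/c) * ((x*y) / (z*w)) := by
          intro c d x y z w hc hz hw
          field_simp
        have gA : Real.Gamma ((m:ℝ) + 3/2) = ((m:ℝ) + 1/2) * Real.Gamma ((m:ℝ) + 1/2) := by
          rw [← Real.Gamma_add_one (by positivity : ((m:ℝ) + 1/2) ≠ 0)]
          congr 1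
          ring
        have gB : Real.Gamma ((m:ℝ) + 1) = (m:ℝ) * Real.Gamma ((m:ℝ)) :=
          Real.Gamma_add_one hm0'.ne'
        have gC' : Real.Gamma ((m:ℝ) + 1 + 3/2) = ((m:ℝ) + 3/2) * Real.Gamma ((m:ℝ) + 3/2) := by
          rw [← Real.Gamma_add_one (by positivity : ((m:ℝ) + 3/2) ≠ 0)]
          congr 1
          ring
        have gD' : Real.Gamma ((m:ℝ) + 1 + 1) = ((m:ℝ) + 1) * Real.Gamma ((m:ℝ) + 1) := by
          rw [← Real.Gamma_add_one (by positivity : ((m:ℝ) + 1) ≠ 0)]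
        have hF1 : ((Real.Gamma ((m:ℝ) + 1/2) : ℝ) : ℂ) * ((Real.Gamma ((m':ℝ) + 3/2) : ℝ) : ℂ)
              / (((Real.Gamma ((m:ℝ)) : ℝ) : ℂ) * ((Real.Gamma ((m':ℝ) + 1) : ℝ) : ℂ))
            = ((m:ℂ) / ((m:ℂ) + 1/2)) *
              (((Real.Gamma ((m:ℝ) + 3/2) : ℝ) : ℂ) * ((Real.Gamma ((m':ℝ) + 3/2) : ℝ) : ℂ)
                / (((Real.Gamma ((m:ℝ) + 1) : ℝ) : ℂ) * ((Real.Gamma ((m':ℝ) + 1) : ℝ) : ℂ))) := by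
          rw [gA, gB]
          push_cast
          exact key1 _ _ _ _ _ _ hmC hmhalf hGa hGb1
        have hF2 : ((Real.Gamma ((m:ℝ) + 1 + 3/2) : ℝ) : ℂ) * ((Real.Gamma ((m':ℝ) + 3/2) : ℝ) : ℂ)
              / (((Real.Gamma ((m:ℝ) + 1 + 1) : ℝ) : ℂ) * ((Real.Gamma ((m':ℝ) + 1) : ℝ) : ℂ))
            = (((m:ℂ) + 3/2) / ((m:ℂ) + 1)) *
              (((Real.Gamma ((m:ℝ) + 3/2) : ℝ) : ℂ) * ((Real.Gamma ((m':ℝ) + 3/2) : ℝ) : ℂ)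
                / (((Real.Gamma ((m:ℝ) + 1) : ℝ) : ℂ) * ((Real.Gamma ((m':ℝ) + 1) : ℝ) : ℂ))) := by
          rw [gC', gD']
          push_cast
          exact key2 _ _ _ _ _ _ hm1 hGa1 hGb1
        rw [hF1, hF2]
        set e : ℂ := (if m' = n' then (1:ℂ) else 0) with he
        set G : ℂ := ((Real.Gamma ((m:ℝ) + 3/2) : ℝ) : ℂ) * ((Real.Gamma ((m':ℝ) + 3/2) : ℝ) : ℂ)
            / (((Real.Gamma ((m:ℝ) + 1) : ℝ) : ℂ) * ((Real.Gamma ((m':ℝ) + 1) : ℝ) : ℂ)) with hGdef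
        have h2m : (1 + (m:ℂ) * 2) ≠ 0 := by
          intro h
          exact hmhalf (by linear_combination h / 2)
        field_simp [hmhalf, hm1, h2m]
        have h2m' : ((m:ℂ) * 2 + 1) ≠ 0 := by
          intro h
          exact h2m (by linear_combination h)
        field_simp [h2m']
        ring
      · -- m = n = 0
        have hm00 : m = 0 := by omega
        subst hm00
        have hdown : φ1 (0-1) (0-1) = 0 := hφzero _ _ (by omega)
        rw [gC, gD] at hup
        rw [hdown, Bx0, hmid, hup, e2]
        simp only [eq_self_iff_true, if_true]
        set e : ℂ := (if m' = n' then (1:ℂ) else 0) with he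
        have hG1C : ((Real.Gamma (((0:ℤ):ℝ) + 1) : ℝ) : ℂ) ≠ 0 := by
          norm_num [Real.Gamma_one]
        have hG2C : ((Real.Gamma ((m':ℝ) + 1) : ℝ) : ℂ) ≠ 0 := by
          have h0 : (0:ℝ) ≤ (m':ℝ) := by exact_mod_cast hm'
          exact Complex.ofReal_ne_zero.mpr (Real.Gamma_pos_of_pos (by linarith)).ne'
        push_cast
        push_cast at hG1C
        field_simp [hG1C, hG2C]
        ring
    · -- off-diagonal: everything vanishes
      have hd1 : ¬ (m - 1 = n - 1) := by omega
      have hd2 : ¬ (m + 1 = n + 1) := by omega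
      by_cases h1mn : 1 ≤ m ∧ 1 ≤ n
      · have hdown := hBφφ (m-1) (n-1) m' n' (by omega) (by omega) hm' hn'
        rw [hmid, hup, hdown, if_neg hd, if_neg hd1, if_neg hd2]
        ring
      · have hdown : φ1 (m-1) (n-1) = 0 := hφzero _ _ (by omega)
        rw [hdown, Bx0, hmid, hup, if_neg hd, if_neg hd2]
        ring
  refine ⟨main, ⟨φ1 0 0, ?_⟩, ⟨ψ 0 0, ?_⟩⟩
  · rw [hBφφ 0 0 0 0 le_rfl le_rfl le_rfl le_rfl]
    have h32 : 0 < Real.Gamma (((0:ℤ):ℝ) + 3/2) := Real.Gamma_pos_of_pos (by norm_num)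
    have h1g : 0 < Real.Gamma (((0:ℤ):ℝ) + 1) := Real.Gamma_pos_of_pos (by norm_num)
    simp only [add_zero, zpow_zero, if_pos rfl, eq_self_iff_true, if_true, mul_one, one_mul]
    rw [← Complex.ofReal_mul, Complex.ofReal_re]
    exact mul_pos (by positivity)
      (div_pos (mul_pos h32 h32) (mul_pos h1g h1g))
  · rw [main 0 0 0 0 le_rfl le_rfl le_rfl le_rfl]
    have h32 : 0 < Real.Gamma (((0:ℤ):ℝ) + 3/2) := Real.Gamma_pos_of_pos (by norm_num)
    have h1g : 0 < Real.Gamma (((0:ℤ):ℝ) + 1) := Real.Gamma_pos_of_pos (by norm_num)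
    simp only [add_zero, zpow_zero, if_pos rfl, eq_self_iff_true, if_true, mul_one, one_mul]
    rw [← Complex.ofReal_mul, ← Complex.ofReal_neg, Complex.ofReal_re]
    have : 0 < 2 * Real.pi ^ 2 *
        (Real.Gamma (((0:ℤ):ℝ) + 3/2) * Real.Gamma (((0:ℤ):ℝ) + 3/2) /
          (Real.Gamma (((0:ℤ):ℝ) + 1) * Real.Gamma (((0:ℤ):ℝ) + 1))) :=
      mul_pos (by positivity) (div_pos (mul_pos h32 h32) (mul_pos h1g h1g))
    linarith

end Stmt19
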